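/- arXiv:1507.02759 — 2 statements merged into one kernel-verified Lean document; each statement's English description precedes it below -/
import Mathlib

section
/- Let E be a Banach lattice and let T : c₀ → E be an order isomorphism with T0 = 0. Denote by (eₙ) the unit vector basis of c₀ and set xₙ = Teₙ. Then every x ∈ E with x ≥ 0 has a unique representation x = ⨆ₙ bₙ·xₙ, where the bₙ are nonnegative real numbers satisfying limₙ ‖bₙ·xₙ‖ = 0. -/
open Filter Topology ZeroAtInfty

namespace ZeroAtInftyContinuousMap

variable {α : Type*} [TopologicalSpace α]

/-- Pointwise supremum on `C₀(α, ℝ)`. -/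
noncomputable instance : Max C₀(α, ℝ) where
  max f g :=
    { toFun := fun x => f x ⊔ g x
      continuous_toFun := (map_continuous f).sup (map_continuous g)
      zero_at_infty' := by
        simpa using (zero_at_infty f).sup_nhds (zero_at_infty g) }

/-- Pointwise infimum on `C₀(α, ℝ)`. -/
noncomputable instance : Min C₀(α, ℝ) where
  min f g :=
    { toFun := fun x => f x ⊓ g x
      continuous_toFun := (map_continuous f).inf (map_continuous g)
      zero_at_infty' := by
        simpa using (zero_at_infty f).inf_nhds (zero_at_infty g) }

/-- `C₀(α, ℝ)` with the pointwise order is a lattice; in particular `c₀ = C₀(ℕ, ℝ)` is the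
Banach lattice of real sequences converging to `0` with coordinatewise order. -/
noncomputable instance : Lattice C₀(α, ℝ) :=
  letI : LE C₀(α, ℝ) := ⟨fun f g => ⇑f ≤ ⇑g⟩
  letI : LT C₀(α, ℝ) := ⟨fun f g => ⇑f < ⇑g⟩
  DFunLike.coe_injective.lattice _ Iff.rfl Iff.rfl (fun _ _ => rfl) (fun _ _ => rfl)

end ZeroAtInftyContinuousMap

/-- The unit vector basis `(eₙ)` of `c₀ = C₀(ℕ, ℝ)`. -/
noncomputable def c0unit (n : ℕ) : C₀(ℕ, ℝ) :=
  { toFun := fun m => if m = n then 1 else 0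
    continuous_toFun := continuous_of_discreteTopology
    zero_at_infty' := by
      rw [cocompact_eq_atTop]
      refine tendsto_nhds_of_eventually_eq ?_
      filter_upwards [Filter.eventually_gt_atTop n] with m hm
      exact if_neg (by omega) }

section Aux

lemma c0_le_def {f g : C₀(ℕ, ℝ)} : f ≤ g ↔ ∀ m, f m ≤ g m := Iff.rfl

lemma c0_tendsto (f : C₀(ℕ, ℝ)) : Tendsto (fun m => f m) atTop (𝓝 0) := by
  have := zero_at_infty f
  rwa [cocompact_eq_atTop] at this

noncomputable def seq0 (a : ℕ → ℝ) (ha : Tendsto a atTop (𝓝 0)) : C₀(ℕ, ℝ) :=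
  { toFun := a
    continuous_toFun := continuous_of_discreteTopology
    zero_at_infty' := by rw [cocompact_eq_atTop]; exact ha }

@[simp] lemma seq0_apply (a : ℕ → ℝ) (ha : Tendsto a atTop (𝓝 0)) (m : ℕ) :
    seq0 a ha m = a m := rfl

noncomputable def sgl (n : ℕ) (c : ℝ) : C₀(ℕ, ℝ) :=
  seq0 (fun m => if m = n then c else 0) (by
    refine tendsto_nhds_of_eventually_eq ?_
    filter_upwards [Filter.eventually_gt_atTop n] with m hm
    exact if_neg (by omega))

@[simp] lemma sgl_apply (n : ℕ) (c : ℝ) (m : ℕ) :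
    sgl n c m = if m = n then c else 0 := rfl

lemma c0unit_eq_sgl (n : ℕ) : c0unit n = sgl n 1 := by
  ext m; rfl

lemma sgl_zero (n : ℕ) : sgl n 0 = (0 : C₀(ℕ, ℝ)) := by
  ext m; simp

lemma sgl_nonneg {n : ℕ} {c : ℝ} (hc : 0 ≤ c) : (0 : C₀(ℕ, ℝ)) ≤ sgl n c := by
  rw [c0_le_def]
  intro m
  simp only [ZeroAtInftyContinuousMap.coe_zero, Pi.zero_apply, sgl_apply]
  split <;> simp [hc]

lemma sgl_le_sgl {n : ℕ} {c c' : ℝ} (h : c ≤ c') (hc : 0 ≤ c) : sgl n c ≤ sgl n c' := by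
  rw [c0_le_def]
  intro m
  simp only [sgl_apply]
  split <;> simp [h]

lemma sgl_le_of {f : C₀(ℕ, ℝ)} (hf : (0:C₀(ℕ, ℝ)) ≤ f) {n : ℕ} {c : ℝ} (hc : c ≤ f n) :
    sgl n c ≤ f := by
  rw [c0_le_def]
  intro m
  simp only [sgl_apply]
  split
  · next h => subst h; exact hc
  · exact (c0_le_def.1 hf m)

lemma le_sgl_eq {h : C₀(ℕ, ℝ)} {n : ℕ} {c : ℝ} (h0 : (0:C₀(ℕ, ℝ)) ≤ h) (hle : h ≤ sgl n c) :
    h = sgl n (h n) := by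
  ext m
  simp only [sgl_apply]
  split
  · next hm => subst hm; rfl
  · next hm =>
    have h1 := c0_le_def.1 h0 m
    have h2 := c0_le_def.1 hle m
    simp only [ZeroAtInftyContinuousMap.coe_zero, Pi.zero_apply] at h1
    simp only [sgl_apply, if_neg hm] at h2
    linarith

lemma isLUB_sgl (f : C₀(ℕ, ℝ)) (hf : (0:C₀(ℕ, ℝ)) ≤ f) :
    IsLUB (Set.range fun n => sgl n (f n)) f := by
  constructor
  · rintro _ ⟨n, rfl⟩
    exact sgl_le_of hf le_rfl
  · intro g hg
    rw [c0_le_def]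
    intro m
    have := c0_le_def.1 (hg ⟨m, rfl⟩) m
    simpa using this


@[simp] lemma c0_inf_apply (f g : C₀(ℕ, ℝ)) (m : ℕ) : (f ⊓ g) m = f m ⊓ g m := rfl

end Aux

section SmulAux

variable {E : Type*} [NormedAddCommGroup E] [Lattice E] [HasSolidNorm E]
    [IsOrderedAddMonoid E] [NormedSpace ℝ E] [PosSMulStrictMono ℝ E] [PosSMulReflectLT ℝ E]

lemma aux_smul_le {a : ℝ} {y z : E} (h : y ≤ z) (ha : 0 ≤ a) : a • y ≤ a • z := by
  rcases ha.eq_or_lt with h0 | h0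
  · simp [← h0]
  · rcases h.eq_or_lt with rfl | hlt
    · exact le_rfl
    · exact (smul_lt_smul_of_pos_left hlt h0).le

lemma aux_smul_nonneg {a : ℝ} {y : E} (ha : 0 ≤ a) (hy : 0 ≤ y) : 0 ≤ a • y := by
  have := aux_smul_le hy ha
  simpa using this

lemma aux_smul_cancel {a : ℝ} {y z : E} (ha : 0 < a) (h : a • y ≤ a • z) : y ≤ z := by
  have := aux_smul_le h (inv_nonneg.2 ha.le)
  rwa [inv_smul_smul₀ ha.ne', inv_smul_smul₀ ha.ne'] at this

lemma aux_scalar_mono {a b : ℝ} {y : E} (h : a ≤ b) (hy : 0 ≤ y) : a • y ≤ b • y := by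
  have h2 := aux_smul_nonneg (sub_nonneg.2 h) hy
  rw [sub_smul] at h2
  exact sub_nonneg.1 h2

lemma aux_smul_ne_zero {a : ℝ} {y : E} (ha : a ≠ 0) (hy : y ≠ 0) : a • y ≠ 0 := by
  intro h
  apply hy
  have : a⁻¹ • (a • y) = a⁻¹ • (0:E) := by rw [h]
  rwa [inv_smul_smul₀ ha, smul_zero] at this

lemma aux_scalar_inj {a b : ℝ} {y : E} (hy : y ≠ 0) (h : a • y = b • y) : a = b := by
  by_contra hab
  have : (a - b) • y = 0 := by rw [sub_smul, h, sub_self]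
  exact aux_smul_ne_zero (sub_ne_zero.2 hab) hy this

lemma aux_scalar_cancel {a b : ℝ} {y : E} (hy0 : 0 ≤ y) (hy : y ≠ 0) (h : a • y ≤ b • y) :
    a ≤ b := by
  by_contra hab
  push_neg at hab
  have h1 : (0:E) ≤ (a - b) • y := aux_smul_nonneg (sub_nonneg.2 hab.le) hy0
  have h2 : (a - b) • y ≤ 0 := by rw [sub_smul]; exact sub_nonpos.2 h
  have h3 : (a - b) • y = 0 := le_antisymm h2 h1
  exact aux_smul_ne_zero (sub_ne_zero.2 (ne_of_gt hab)) hy h3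

lemma aux_norm_le {y z : E} (hy : 0 ≤ y) (h : y ≤ z) : ‖y‖ ≤ ‖z‖ := by
  have hz : 0 ≤ z := hy.trans h
  refine norm_le_norm_of_abs_le_abs ?_
  rwa [abs_of_nonneg hy, abs_of_nonneg hz]


/-- If `[0,u]` is a chain, every element of `[0,u]` is a scalar multiple of `u`. -/
lemma chain_smul {u v : E} (hu : 0 ≤ u)
    (hch : ∀ y z : E, 0 ≤ y → y ≤ u → 0 ≤ z → z ≤ u → y ≤ z ∨ z ≤ y)
    (hv0 : 0 ≤ v) (hvu : v ≤ u) : ∃ c : ℝ, 0 ≤ c ∧ c ≤ 1 ∧ v = c • u := by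
  set s : Set ℝ := {t : ℝ | 0 ≤ t ∧ t ≤ 1 ∧ t • u ≤ v} with hs
  have h0s : (0:ℝ) ∈ s := ⟨le_rfl, zero_le_one, by simpa using hv0⟩
  have hbdd : BddAbove s := ⟨1, fun t ht => ht.2.1⟩
  set c := sSup s with hc
  have hc0 : 0 ≤ c := le_csSup hbdd h0s
  have hc1 : c ≤ 1 := csSup_le ⟨0, h0s⟩ (fun t ht => ht.2.1)
  have hdown : ∀ t : ℝ, 0 ≤ t → t < c → t ∈ s := by
    intro t ht htc
    obtain ⟨t', ht's, htt'⟩ := exists_lt_of_lt_csSup ⟨0, h0s⟩ htc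
    exact ⟨ht, htt'.le.trans ht's.2.1, (aux_scalar_mono htt'.le hu).trans ht's.2.2⟩
  have honediv : Tendsto (fun k : ℕ => 1/((k:ℝ)+1)) atTop (𝓝 0) :=
    tendsto_one_div_add_atTop_nhds_zero_nat
  have hcu_le : c • u ≤ v := by
    have hmem : ∀ k : ℕ, (max (c - 1/((k:ℝ)+1)) 0) ∈ s := by
      intro k
      rcases le_or_gt (c - 1/((k:ℝ)+1)) 0 with h | h
      · rw [max_eq_right h]; exact h0s
      · rw [max_eq_left h.le]
        apply hdown _ h.le
        have hpos : (0:ℝ) < 1/((k:ℝ)+1) := by positivity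
        linarith
    have htend : Tendsto (fun k : ℕ => max (c - 1/((k:ℝ)+1)) 0) atTop (𝓝 c) := by
      have h1 : Tendsto (fun k : ℕ => c - 1/((k:ℝ)+1)) atTop (𝓝 (c - 0)) :=
        tendsto_const_nhds.sub honediv
      rw [sub_zero] at h1
      have h2 := h1.max (tendsto_const_nhds (x := (0:ℝ)))
      simpa [max_eq_left hc0] using h2
    have hseq : Tendsto (fun k : ℕ => (max (c - 1/((k:ℝ)+1)) 0) • u) atTop (𝓝 (c • u)) :=
      htend.smul_const u
    exact le_of_tendsto hseq (Filter.Eventually.of_forall (fun k => (hmem k).2.2))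
  have hle2 : v ≤ c • u := by
    rcases hc1.eq_or_lt with h1 | h1
    · rw [h1, one_smul]; exact hvu
    · have hmem2 : ∀ k : ℕ, v ≤ (min (c + 1/((k:ℝ)+1)) 1) • u := by
        intro k
        set t := min (c + 1/((k:ℝ)+1)) 1 with ht
        have hpos : (0:ℝ) < 1/((k:ℝ)+1) := by positivity
        have hct : c < t := lt_min (by linarith) h1
        have ht1 : t ≤ 1 := min_le_right _ _
        have ht0 : 0 ≤ t := hc0.trans hct.le
        have htu_le : t • u ≤ u := by
          have := aux_scalar_mono ht1 hu
          rwa [one_smul] at this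
        have htu0 : 0 ≤ t • u := aux_smul_nonneg ht0 hu
        rcases hch v (t • u) hv0 hvu htu0 htu_le with h | h
        · exact h
        · exact absurd (le_csSup hbdd ⟨ht0, ht1, h⟩) (not_le.2 hct)
      have htend : Tendsto (fun k : ℕ => min (c + 1/((k:ℝ)+1)) 1) atTop (𝓝 c) := by
        have h2 : Tendsto (fun k : ℕ => c + 1/((k:ℝ)+1)) atTop (𝓝 (c + 0)) :=
          tendsto_const_nhds.add honediv
        rw [add_zero] at h2
        have h3 := h2.min (tendsto_const_nhds (x := (1:ℝ)))
        simpa [min_eq_left hc1] using h3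
      exact ge_of_tendsto (htend.smul_const u) (Filter.Eventually.of_forall hmem2)
  exact ⟨c, hc0, hc1, le_antisymm hle2 hcu_le⟩

end SmulAux


/-- Let `T : c₀ → E` be an order isomorphism onto a Banach lattice `E` with
`T 0 = 0`, and let `xₙ = T eₙ` where `(eₙ)` is the unit vector basis of `c₀`. Then every
`x ≥ 0` in `E` has a unique representation `x = ⨆ₙ bₙ • xₙ` with all `bₙ ≥ 0` and
`limₙ ‖bₙ • xₙ‖ = 0`. -/
theorem stmt6 (E : Type*) [NormedAddCommGroup E] [Lattice E] [HasSolidNorm E]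
    [IsOrderedAddMonoid E] [NormedSpace ℝ E] [PosSMulStrictMono ℝ E] [PosSMulReflectLT ℝ E]
    [CompleteSpace E]
    (T : C₀(ℕ, ℝ) → E) (hbij : Function.Bijective T)
    (hord : ∀ f g : C₀(ℕ, ℝ), f ≤ g ↔ T f ≤ T g) (hzero : T 0 = 0) :
    ∀ x : E, 0 ≤ x →
      ∃! b : ℕ → ℝ,
        (∀ n, 0 ≤ b n) ∧
        Filter.Tendsto (fun n => ‖b n • T (c0unit n)‖) Filter.atTop (nhds 0) ∧
        IsLUB (Set.range fun n => b n • T (c0unit n)) x := by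
  intro x hx
  classical
  set S : E → C₀(ℕ, ℝ) := ⇑(Equiv.ofBijective T hbij).symm with hSdef
  have hTS : ∀ y, T (S y) = y := fun y => (Equiv.ofBijective T hbij).apply_symm_apply y
  have hST : ∀ f, S (T f) = f := fun f => (Equiv.ofBijective T hbij).symm_apply_apply f
  have hSzero : S 0 = 0 := by rw [← hzero, hST]
  have hmono : ∀ {f g : C₀(ℕ, ℝ)}, f ≤ g → T f ≤ T g := fun {f g} h => (hord f g).1 h
  have hordS : ∀ y z : E, y ≤ z ↔ S y ≤ S z := by
    intro y z
    rw [hord (S y) (S z), hTS, hTS]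
  have hxsnn : ∀ n, (0:E) ≤ T (c0unit n) := by
    intro n
    rw [← hzero]
    exact hmono (by rw [c0unit_eq_sgl]; exact sgl_nonneg zero_le_one)
  have hxsne : ∀ n, T (c0unit n) ≠ 0 := by
    intro n h
    have h2 : c0unit n = 0 := hbij.1 (h.trans hzero.symm)
    have h3 := congrFun (congrArg DFunLike.coe h2) n
    simp [c0unit] at h3
  have hTinf : ∀ p q : C₀(ℕ, ℝ), T (p ⊓ q) = T p ⊓ T q := by
    intro p q
    refine le_antisymm (le_inf (hmono inf_le_left) (hmono inf_le_right)) ?_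
    have h1 : S (T p ⊓ T q) ≤ p := by
      rw [hord _ p, hTS]; exact inf_le_left
    have h2 : S (T p ⊓ T q) ≤ q := by
      rw [hord _ q, hTS]; exact inf_le_right
    calc T p ⊓ T q = T (S (T p ⊓ T q)) := (hTS _).symm
      _ ≤ T (p ⊓ q) := hmono (le_inf h1 h2)
  have hchainE : ∀ (n : ℕ) (c : ℝ) (y z : E),
      0 ≤ y → y ≤ T (sgl n c) → 0 ≤ z → z ≤ T (sgl n c) → y ≤ z ∨ z ≤ y := by
    intro n c y z hy0 hyu hz0 hzu
    have hSy0 : (0:C₀(ℕ, ℝ)) ≤ S y := by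
      have := (hordS 0 y).1 hy0; rwa [hSzero] at this
    have hSyu : S y ≤ sgl n c := by
      have := (hordS y (T (sgl n c))).1 hyu; rwa [hST] at this
    have hSz0 : (0:C₀(ℕ, ℝ)) ≤ S z := by
      have := (hordS 0 z).1 hz0; rwa [hSzero] at this
    have hSzu : S z ≤ sgl n c := by
      have := (hordS z (T (sgl n c))).1 hzu; rwa [hST] at this
    have hy' : S y = sgl n ((S y) n) := le_sgl_eq hSy0 hSyu
    have hz' : S z = sgl n ((S z) n) := le_sgl_eq hSz0 hSzu
    have hyn0 : 0 ≤ (S y) n := by simpa using c0_le_def.1 hSy0 n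
    have hzn0 : 0 ≤ (S z) n := by simpa using c0_le_def.1 hSz0 n
    rcases le_total ((S y) n) ((S z) n) with h | h
    · left
      have h1 : S y ≤ S z := by rw [hy', hz']; exact sgl_le_sgl h hyn0
      exact (hordS y z).2 h1
    · right
      have h1 : S z ≤ S y := by rw [hy', hz']; exact sgl_le_sgl h hzn0
      exact (hordS z y).2 h1
  -- the coefficient functions β n
  have hbeta : ∀ (n : ℕ) (c : ℝ),
      ∃ bb : ℝ, 0 ≤ bb ∧ (0 ≤ c → T (sgl n c) = bb • T (c0unit n)) := by
    intro n c
    by_cases hc : 0 ≤ c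
    · set c' := max c 1 with hc'
      have hcc' : c ≤ c' := le_max_left _ _
      have h1c' : (1:ℝ) ≤ c' := le_max_right _ _
      have h0c' : (0:ℝ) ≤ c' := zero_le_one.trans h1c'
      have hu0 : (0:E) ≤ T (sgl n c') := by
        rw [← hzero]; exact hmono (sgl_nonneg h0c')
      have hv0 : (0:E) ≤ T (sgl n c) := by
        rw [← hzero]; exact hmono (sgl_nonneg hc)
      have hvu : T (sgl n c) ≤ T (sgl n c') := hmono (sgl_le_sgl hcc' hc)
      have hx0 : (0:E) ≤ T (c0unit n) := hxsnn n
      have hxu : T (c0unit n) ≤ T (sgl n c') := by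
        rw [c0unit_eq_sgl]; exact hmono (sgl_le_sgl h1c' zero_le_one)
      obtain ⟨a, ha0, _, hav⟩ := chain_smul hu0 (hchainE n c') hv0 hvu
      obtain ⟨a', ha'0, _, hav'⟩ := chain_smul hu0 (hchainE n c') hx0 hxu
      have ha'ne : a' ≠ 0 := by
        intro h; exact hxsne n (by rw [hav', h, zero_smul])
      refine ⟨a / a', div_nonneg ha0 ha'0, fun _ => ?_⟩
      rw [hav, hav', smul_smul, div_mul_cancel₀ a ha'ne]
    · exact ⟨0, le_rfl, fun h => absurd h hc⟩
  choose β hβ using hbeta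
  have hβ0 : ∀ n c, 0 ≤ β n c := fun n c => (hβ n c).1
  have hβT : ∀ n c, 0 ≤ c → T (sgl n c) = β n c • T (c0unit n) := fun n c hc => (hβ n c).2 hc
  have hβzero : ∀ n, β n 0 = 0 := by
    intro n
    have h1 := hβT n 0 le_rfl
    rw [sgl_zero, hzero] at h1
    exact (aux_scalar_inj (hxsne n) (by rw [← h1, zero_smul])).symm
  have hβmono : ∀ n c c', 0 ≤ c → c ≤ c' → β n c ≤ β n c' := by
    intro n c c' hc hcc'
    have hc' : 0 ≤ c' := hc.trans hcc'
    have h1 : T (sgl n c) ≤ T (sgl n c') := hmono (sgl_le_sgl hcc' hc)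
    rw [hβT n c hc, hβT n c' hc'] at h1
    exact aux_scalar_cancel (hxsnn n) (hxsne n) h1
  -- surjectivity of β n onto [0, ∞)
  have hsurj : ∀ (n : ℕ) (bb : ℝ), ∃ cc, 0 ≤ cc ∧ (0 ≤ bb → β n cc = bb) := by
    intro n bb
    rcases lt_or_ge 0 bb with hb | hb
    case inr =>
      rcases hb.eq_or_lt with hb0 | hbneg
      · exact ⟨0, le_rfl, fun _ => by rw [hβzero n, hb0]⟩
      · exact ⟨0, le_rfl, fun h => absurd h (not_le.2 hbneg)⟩
    case inl =>
      set g := S (bb • T (c0unit n)) with hgdef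
      have hbx0 : (0:E) ≤ bb • T (c0unit n) := aux_smul_nonneg hb.le (hxsnn n)
      have hg0 : (0:C₀(ℕ, ℝ)) ≤ g := by
        have := (hordS 0 _).1 hbx0; rwa [hSzero] at this
      have hTg : T g = bb • T (c0unit n) := hTS _
      have hgne : g ≠ 0 := by
        intro h
        exact aux_smul_ne_zero (ne_of_gt hb) (hxsne n) (by rw [← hTg, h, hzero])
      have hex : ∃ m, g m ≠ 0 := by
        by_contra h
        push_neg at h
        exact hgne (DFunLike.ext _ _ (by simpa using h))
      obtain ⟨m, hm⟩ := hex
      have hgm0 : 0 ≤ g m := by simpa using c0_le_def.1 hg0 m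
      have hsupp : ∀ m', m' ≠ m → g m' = 0 := by
        intro m' hm'
        by_contra hm'0
        have hgm'0 : 0 ≤ g m' := by simpa using c0_le_def.1 hg0 m'
        have hy_le : T (sgl m (g m)) ≤ bb • T (c0unit n) := by
          rw [← hTg]; exact hmono (sgl_le_of hg0 le_rfl)
        have hz_le : T (sgl m' (g m')) ≤ bb • T (c0unit n) := by
          rw [← hTg]; exact hmono (sgl_le_of hg0 le_rfl)
        have hy0 : (0:E) ≤ T (sgl m (g m)) := by
          rw [← hzero]; exact hmono (sgl_nonneg hgm0)
        have hz0 : (0:E) ≤ T (sgl m' (g m')) := by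
          rw [← hzero]; exact hmono (sgl_nonneg hgm'0)
        have hbinv : (0:ℝ) < bb⁻¹ := inv_pos.2 hb
        have hkey : ∀ w : E, 0 ≤ w → w ≤ bb • T (c0unit n) →
            0 ≤ bb⁻¹ • w ∧ bb⁻¹ • w ≤ T (sgl n 1) := by
          intro w hw0 hwle
          refine ⟨aux_smul_nonneg hbinv.le hw0, ?_⟩
          have := aux_smul_le hwle hbinv.le
          rwa [inv_smul_smul₀ (ne_of_gt hb), c0unit_eq_sgl] at this
        obtain ⟨hy0', hyle'⟩ := hkey _ hy0 hy_le
        obtain ⟨hz0', hzle'⟩ := hkey _ hz0 hz_le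
        have hscaleback : ∀ w w' : E, bb⁻¹ • w ≤ bb⁻¹ • w' → w ≤ w' := by
          intro w w' h
          have := aux_smul_le h hb.le
          rwa [smul_inv_smul₀ (ne_of_gt hb), smul_inv_smul₀ (ne_of_gt hb)] at this
        rcases hchainE n 1 _ _ hy0' hyle' hz0' hzle' with h | h
        · have h2 : T (sgl m (g m)) ≤ T (sgl m' (g m')) := hscaleback _ _ h
          have h3 : sgl m (g m) ≤ sgl m' (g m') := (hord _ _).2 h2
          have h4 := c0_le_def.1 h3 m
          simp only [sgl_apply, if_pos rfl] at h4
          rw [if_neg (Ne.symm hm')] at h4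
          exact hm (le_antisymm h4 hgm0)
        · have h2 : T (sgl m' (g m')) ≤ T (sgl m (g m)) := hscaleback _ _ h
          have h3 : sgl m' (g m') ≤ sgl m (g m) := (hord _ _).2 h2
          have h4 := c0_le_def.1 h3 m'
          simp only [sgl_apply, if_pos rfl] at h4
          rw [if_neg hm'] at h4
          exact hm'0 (le_antisymm h4 hgm'0)
      have hgs : g = sgl m (g m) := by
        ext m''
        simp only [sgl_apply]
        split
        · next h => rw [h]
        · next h => exact hsupp m'' h
      have hmn : m = n := by
        by_contra hmn
        have hinf : sgl m (g m) ⊓ sgl n 1 = 0 := by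
          ext m''
          simp only [c0_inf_apply, sgl_apply, ZeroAtInftyContinuousMap.coe_zero, Pi.zero_apply]
          split_ifs with h1 h2 h2
          · exact absurd (h1.symm.trans h2) hmn
          · exact min_eq_right hgm0
          · exact min_eq_left zero_le_one
          · exact min_self 0
        have h5 : T (sgl m (g m)) ⊓ T (sgl n 1) = 0 := by
          rw [← hTinf, hinf, hzero]
        rw [← hgs, hTg, ← c0unit_eq_sgl] at h5
        set t := min bb 1 with htdef
        have ht0 : 0 < t := lt_min hb one_pos
        have h6 : t • T (c0unit n) ≤ bb • T (c0unit n) :=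
          aux_scalar_mono (min_le_left _ _) (hxsnn n)
        have h7 : t • T (c0unit n) ≤ T (c0unit n) := by
          have := aux_scalar_mono (min_le_right bb 1) (hxsnn n)
          rwa [one_smul] at this
        have h8 : t • T (c0unit n) ≤ 0 := by rw [← h5]; exact le_inf h6 h7
        have h9 : (0:E) ≤ t • T (c0unit n) := aux_smul_nonneg ht0.le (hxsnn n)
        exact aux_smul_ne_zero (ne_of_gt ht0) (hxsne n) (le_antisymm h8 h9)
      subst hmn
      refine ⟨g m, hgm0, fun _ => ?_⟩
      have h10 : T (sgl m (g m)) = bb • T (c0unit m) := by rw [← hgs, hTg]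
      have h11 := hβT m (g m) hgm0
      exact aux_scalar_inj (hxsne m) (h11.symm.trans h10)
  -- setup for x
  set f := S x with hfdef
  have hTf : T f = x := hTS x
  have hf0 : (0:C₀(ℕ, ℝ)) ≤ f := by
    have := (hordS 0 x).1 hx; rwa [hSzero] at this
  have hfn0 : ∀ n, 0 ≤ f n := fun n => by simpa using c0_le_def.1 hf0 n
  set b : ℕ → ℝ := fun n => β n (f n) with hbdef
  have hb0 : ∀ n, 0 ≤ b n := fun n => hβ0 n (f n)
  have hbT : ∀ n, T (sgl n (f n)) = b n • T (c0unit n) := fun n => hβT n (f n) (hfn0 n)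
  -- scalar transfer
  have htrans : ∀ (Λ : ℝ), 0 < Λ → ∀ n, β n (S (Λ • x) n) = Λ * b n := by
    intro Λ hΛ n
    have hΛx0 : (0:E) ≤ Λ • x := aux_smul_nonneg hΛ.le hx
    have hF0 : (0:C₀(ℕ, ℝ)) ≤ S (Λ • x) := by
      have := (hordS 0 (Λ • x)).1 hΛx0; rwa [hSzero] at this
    have hFn0 : ∀ m, 0 ≤ S (Λ • x) m := fun m => by simpa using c0_le_def.1 hF0 m
    have hTF : T (S (Λ • x)) = Λ • x := hTS _
    have hi : β n (S (Λ • x) n) ≤ Λ * b n := by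
      have h1 : T (sgl n (S (Λ • x) n)) ≤ Λ • x := by
        have h := hmono (sgl_le_of hF0 (le_rfl : S (Λ • x) n ≤ S (Λ • x) n))
        rwa [hTF] at h
      rw [hβT n _ (hFn0 n)] at h1
      have h2 : (Λ⁻¹ * β n (S (Λ • x) n)) • T (c0unit n) ≤ x := by
        have := aux_smul_le h1 (inv_pos.2 hΛ).le
        rwa [inv_smul_smul₀ (ne_of_gt hΛ), smul_smul] at this
      have hr0 : 0 ≤ Λ⁻¹ * β n (S (Λ • x) n) :=
        mul_nonneg (inv_pos.2 hΛ).le (hβ0 _ _)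
      obtain ⟨cc, hcc0, hccb⟩ := hsurj n (Λ⁻¹ * β n (S (Λ • x) n))
      have hccr := hccb hr0
      have h3 : T (sgl n cc) ≤ T f := by
        rw [hβT n cc hcc0, hccr, hTf]; exact h2
      have h4 : cc ≤ f n := by
        have := c0_le_def.1 ((hord _ _).2 h3) n
        simpa using this
      have h5 : β n cc ≤ β n (f n) := hβmono n cc (f n) hcc0 h4
      rw [hccr] at h5
      calc β n (S (Λ • x) n) = Λ * (Λ⁻¹ * β n (S (Λ • x) n)) := by
            rw [← mul_assoc, mul_inv_cancel₀ (ne_of_gt hΛ), one_mul]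
        _ ≤ Λ * b n := mul_le_mul_of_nonneg_left h5 hΛ.le
    have hii : Λ * b n ≤ β n (S (Λ • x) n) := by
      have h1 : T (sgl n (f n)) ≤ x := by
        rw [← hTf]; exact hmono (sgl_le_of hf0 le_rfl)
      rw [hbT n] at h1
      have h2 : (Λ * b n) • T (c0unit n) ≤ Λ • x := by
        have := aux_smul_le h1 hΛ.le
        rwa [smul_smul] at this
      obtain ⟨cc, hcc0, hccb⟩ := hsurj n (Λ * b n)
      have hccr := hccb (mul_nonneg hΛ.le (hb0 n))
      have h3 : T (sgl n cc) ≤ T (S (Λ • x)) := by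
        rw [hβT n cc hcc0, hccr, hTF]; exact h2
      have h4 : cc ≤ S (Λ • x) n := by
        have := c0_le_def.1 ((hord _ _).2 h3) n
        simpa using this
      have h5 := hβmono n cc (S (Λ • x) n) hcc0 h4
      rwa [hccr] at h5
    exact le_antisymm hi hii
  -- LUB transfer
  have hlubT : ∀ g : C₀(ℕ, ℝ), (0:C₀(ℕ, ℝ)) ≤ g →
      IsLUB (Set.range fun n => T (sgl n (g n))) (T g) := by
    intro g hg
    have hl := isLUB_sgl g hg
    constructor
    · rintro _ ⟨n, rfl⟩
      exact hmono (hl.1 ⟨n, rfl⟩)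
    · intro y hy
      have h1 : ∀ n, sgl n (g n) ≤ S y := by
        intro n
        have h2 : T (sgl n (g n)) ≤ y := hy ⟨n, rfl⟩
        have := (hordS _ _).1 h2
        rwa [hST] at this
      have h3 : g ≤ S y := hl.2 (by rintro _ ⟨n, rfl⟩; exact h1 n)
      have := hmono h3
      rwa [hTS] at this
  -- norm convergence
  have htendb : Filter.Tendsto (fun n => ‖b n • T (c0unit n)‖) Filter.atTop (nhds 0) := by
    by_contra hcon
    set d : ℕ → ℝ := fun n => ‖b n • T (c0unit n)‖ with hd
    have hd0 : ∀ n, 0 ≤ d n := fun n => norm_nonneg _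
    rw [Metric.tendsto_atTop] at hcon
    push_neg at hcon
    obtain ⟨ε, hε, hfreq⟩ := hcon
    have hfreq' : ∀ N, ∃ n, N ≤ n ∧ ε ≤ d n := by
      intro N
      obtain ⟨n, hn, h⟩ := hfreq N
      refine ⟨n, hn, ?_⟩
      rwa [Real.dist_eq, sub_zero, abs_of_nonneg (hd0 n)] at h
    choose P hP1 hP2 using hfreq'
    have hFk0 : ∀ k : ℕ, (0:C₀(ℕ, ℝ)) ≤ S ((k:ℝ) • x) := by
      intro k
      have h := (hordS 0 ((k:ℝ) • x)).1 (aux_smul_nonneg (by positivity) hx)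
      rwa [hSzero] at h
    have hFkn0 : ∀ (k m : ℕ), 0 ≤ S ((k:ℝ) • x) m := fun k m => by
      simpa using c0_le_def.1 (hFk0 k) m
    have hM : ∀ k : ℕ, ∃ N, ∀ m, N ≤ m → S ((k:ℝ) • x) m < 1/((k:ℝ)+1) := by
      intro k
      have h := c0_tendsto (S ((k:ℝ) • x))
      have h2 : ∀ᶠ m in Filter.atTop, S ((k:ℝ) • x) m < 1/((k:ℝ)+1) :=
        h.eventually_lt_const (by positivity)
      obtain ⟨N, hN⟩ := Filter.eventually_atTop.1 h2
      exact ⟨N, hN⟩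
    choose M hMspec using hM
    set nn : ℕ → ℕ := fun k => Nat.rec (P (M 0)) (fun k ih => P (max (M (k+1)) (ih+1))) k
      with hnn
    have hnn0 : nn 0 = P (M 0) := rfl
    have hnns : ∀ k, nn (k+1) = P (max (M (k+1)) (nn k + 1)) := fun k => rfl
    have hnnM : ∀ k, M k ≤ nn k := by
      intro k
      cases k with
      | zero => exact hP1 _
      | succ k => rw [hnns]; exact (le_max_left _ _).trans (hP1 _)
    have hnnlt : ∀ k, nn k < nn (k+1) := by
      intro k
      rw [hnns]
      exact lt_of_lt_of_le (Nat.lt_succ_self _) ((le_max_right _ _).trans (hP1 _))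
    have hnnmono : StrictMono nn := strictMono_nat_of_lt_succ hnnlt
    have hnnd : ∀ k, ε ≤ d (nn k) := by
      intro k
      cases k with
      | zero => exact hP2 _
      | succ k => rw [hnns]; exact hP2 _
    set hs : ℕ → ℝ := fun m =>
      if hm : ∃ k, nn k = m then S ((hm.choose : ℝ) • x) m else 0 with hhs
    have hs_at : ∀ k, hs (nn k) = S ((k:ℝ) • x) (nn k) := by
      intro k
      have hex : ∃ k', nn k' = nn k := ⟨k, rfl⟩
      have h1 : hs (nn k) = S ((hex.choose : ℝ) • x) (nn k) := by
        simp only [hhs]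
        rw [dif_pos hex]
      rw [h1, hnnmono.injective hex.choose_spec]
    have hs0 : ∀ m, 0 ≤ hs m := by
      intro m
      by_cases hm : ∃ k, nn k = m
      · simp only [hhs]; rw [dif_pos hm]; exact hFkn0 _ m
      · simp only [hhs]; rw [dif_neg hm]
    have hstend : Filter.Tendsto hs Filter.atTop (nhds 0) := by
      rw [Metric.tendsto_atTop]
      intro ε' hε'
      obtain ⟨K, hK⟩ := exists_nat_one_div_lt hε'
      refine ⟨nn K + 1, fun m hm => ?_⟩
      rw [Real.dist_eq, sub_zero, abs_of_nonneg (hs0 m)]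
      by_cases hmm : ∃ k, nn k = m
      · have heq : hs m = S ((hmm.choose : ℝ) • x) m := by
          simp only [hhs]; rw [dif_pos hmm]
        have hk'm : nn hmm.choose = m := hmm.choose_spec
        have hKk' : K < hmm.choose := by
          by_contra hKk
          push_neg at hKk
          have := hnnmono.monotone hKk
          omega
        have hmMk' : M hmm.choose ≤ m := by have := hnnM hmm.choose; omega
        have h1 : S ((hmm.choose : ℝ) • x) m < 1/((hmm.choose : ℝ)+1) :=
          hMspec _ m hmMk'
        have h2 : 1/((hmm.choose : ℝ)+1) ≤ 1/((K:ℝ)+1) := by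
          apply one_div_le_one_div_of_le (by positivity)
          have : (K:ℝ) ≤ hmm.choose := by exact_mod_cast hKk'.le
          linarith
        rw [heq]
        exact (h1.trans_le h2).trans hK
      · have h0 : hs m = 0 := by simp only [hhs]; rw [dif_neg hmm]
        rw [h0]; exact hε'
    set H := seq0 hs hstend with hH
    have hkey : ∀ k : ℕ, ((k:ℝ) * b (nn k)) • T (c0unit (nn k)) ≤ T H := by
      intro k
      have h1 : sgl (nn k) (S ((k:ℝ) • x) (nn k)) ≤ H := by
        rw [c0_le_def]
        intro m
        simp only [sgl_apply, hH, seq0_apply]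
        split
        · next h => rw [h, hs_at k]
        · next h => exact hs0 m
      have h2 := hmono h1
      have h3 : T (sgl (nn k) (S ((k:ℝ) • x) (nn k)))
          = β (nn k) (S ((k:ℝ) • x) (nn k)) • T (c0unit (nn k)) := hβT _ _ (hFkn0 k _)
      rcases Nat.eq_zero_or_pos k with hk0 | hkpos
      · subst hk0
        have h4 : ((0:ℕ):ℝ) * b (nn 0) = 0 := by norm_num
        rw [h4, zero_smul, ← hzero]
        exact hmono (by rw [c0_le_def]; intro m; simpa [hH] using hs0 m)
      · have h4 : β (nn k) (S ((k:ℝ) • x) (nn k)) = (k:ℝ) * b (nn k) :=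
          htrans (k:ℝ) (by exact_mod_cast hkpos) (nn k)
        rw [← h4, ← h3]
        exact h2
    obtain ⟨k, hk⟩ := exists_nat_gt (‖T H‖ / ε)
    have h5 : (k:ℝ) * ε ≤ (k:ℝ) * d (nn k) :=
      mul_le_mul_of_nonneg_left (hnnd k) (Nat.cast_nonneg k)
    have h6 : (k:ℝ) * d (nn k) = ‖((k:ℝ) * b (nn k)) • T (c0unit (nn k))‖ := by
      simp only [hd]
      rw [norm_smul, norm_smul, Real.norm_eq_abs, Real.norm_eq_abs,
        abs_of_nonneg (hb0 _), abs_of_nonneg (mul_nonneg (Nat.cast_nonneg k) (hb0 _))]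
      ring
    have h7 : ‖((k:ℝ) * b (nn k)) • T (c0unit (nn k))‖ ≤ ‖T H‖ :=
      aux_norm_le (aux_smul_nonneg (mul_nonneg (Nat.cast_nonneg k) (hb0 _)) (hxsnn _))
        (hkey k)
    have h9 : ‖T H‖ < (k:ℝ) * ε := by rwa [div_lt_iff₀ hε] at hk
    rw [h6] at h5
    linarith
  -- assemble
  refine ⟨b, ⟨hb0, htendb, ?_⟩, ?_⟩
  · have h1 : (fun n => b n • T (c0unit n)) = fun n => T (sgl n (f n)) :=
      funext fun n => (hbT n).symm
    rw [h1]
    have := hlubT f hf0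
    rwa [hTf] at this
  · rintro b' ⟨hb'0, -, hb'lub⟩
    have hcc : ∀ n, ∃ cc, 0 ≤ cc ∧ β n cc = b' n := by
      intro n
      obtain ⟨cc, h1, h2⟩ := hsurj n (b' n)
      exact ⟨cc, h1, h2 (hb'0 n)⟩
    choose c hc0 hcβ using hcc
    have hcb : ∀ n, T (sgl n (c n)) = b' n • T (c0unit n) := by
      intro n; rw [hβT n (c n) (hc0 n), hcβ n]
    have hcle : ∀ n, c n ≤ f n := by
      intro n
      have h1 : b' n • T (c0unit n) ≤ x := hb'lub.1 (Set.mem_range_self n)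
      rw [← hcb n, ← hTf] at h1
      have h2 := c0_le_def.1 ((hord _ _).2 h1) n
      simpa using h2
    have hctend : Filter.Tendsto c Filter.atTop (nhds 0) :=
      squeeze_zero hc0 hcle (c0_tendsto f)
    have hg0 : (0:C₀(ℕ, ℝ)) ≤ seq0 c hctend := by
      rw [c0_le_def]; intro m; simpa using hc0 m
    have hglub := hlubT (seq0 c hctend) hg0
    have hfun : (fun n => T (sgl n ((seq0 c hctend) n))) = fun n => b' n • T (c0unit n) :=
      funext fun n => hcb n
    rw [hfun] at hglub
    have hTgx : T (seq0 c hctend) = x := hglub.unique hb'lub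
    have hgf : seq0 c hctend = f := hbij.1 (hTgx.trans hTf.symm)
    funext n
    have h3 : c n = f n := by
      have := congrFun (congrArg DFunLike.coe hgf) n
      simpa using this
    show b' n = β n (f n)
    rw [← h3, hcβ n]
end

section
/- Let G be a Banach lattice and let S : c₀ → G be a linear bijection such that x ≤ y if and only if Sx ≤ Sy for all x, y ∈ c₀ (no continuity of S or S⁻¹ is assumed). Denote by (e_k) the unit vector basis of c₀. Then inf_k ‖S e_k‖ > 0. -/
open Filter Topology ZeroAtInfty

lemma c0_le_iff {f g : C₀(ℕ, ℝ)} : f ≤ g ↔ ∀ x, f x ≤ g x := Iff.rfl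

lemma c0unit_nonneg (n : ℕ) : (0 : C₀(ℕ, ℝ)) ≤ c0unit n := by
  rw [c0_le_iff]
  intro x
  simp only [ZeroAtInftyContinuousMap.coe_zero, Pi.zero_apply]
  show (0:ℝ) ≤ if x = n then 1 else 0
  split <;> norm_num

/-- Let `G` be a Banach lattice and `S : c₀ → G` a linear bijection which is
an order isomorphism (no continuity assumed). Then `inf_k ‖S eₖ‖ > 0`, where `(eₖ)` is the
unit vector basis of `c₀`. -/
theorem stmt11 (G : Type*) [NormedAddCommGroup G] [Lattice G] [HasSolidNorm G] [IsOrderedAddMonoid G]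
    [NormedSpace ℝ G] [PosSMulStrictMono ℝ G] [PosSMulReflectLT ℝ G]
    [CompleteSpace G]
    (S : C₀(ℕ, ℝ) ≃ₗ[ℝ] G)
    (hord : ∀ f g : C₀(ℕ, ℝ), f ≤ g ↔ S f ≤ S g) :
    ∃ c > (0 : ℝ), ∀ k : ℕ, c ≤ ‖S (c0unit k)‖ := by
  by_contra hc
  push_neg at hc
  have hSpos : ∀ n : ℕ, 0 ≤ S (c0unit n) := by
    intro n
    have h0 : (0 : C₀(ℕ, ℝ)) ≤ c0unit n := c0unit_nonneg n
    have := (hord 0 (c0unit n)).mp h0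
    rwa [map_zero] at this
  have hpos : ∀ n : ℕ, 0 < ‖S (c0unit n)‖ := by
    intro n
    rw [norm_pos_iff]
    intro h
    have h0 : c0unit n = 0 := (LinearEquiv.map_eq_zero_iff S).mp h
    have := congrArg (fun f : C₀(ℕ, ℝ) => f n) h0
    simp [c0unit] at this
  have key : ∀ (N : ℕ) (ε : ℝ), 0 < ε → ∃ k, N < k ∧ ‖S (c0unit k)‖ < ε := by
    intro N ε hε
    set c := min ε ((Finset.range (N + 1)).inf' (by simp) fun m => ‖S (c0unit m)‖) with hcdef
    have hc0 : 0 < c := by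
      refine lt_min hε ?_
      rw [Finset.lt_inf'_iff]
      exact fun m _ => hpos m
    obtain ⟨k, hk⟩ := hc c hc0
    refine ⟨k, ?_, hk.trans_le (min_le_left _ _)⟩
    by_contra hkN
    push_neg at hkN
    have hmem : k ∈ Finset.range (N + 1) := Finset.mem_range.mpr (by omega)
    have : c ≤ ‖S (c0unit k)‖ :=
      (min_le_right _ _).trans (Finset.inf'_le _ hmem)
    exact absurd hk (not_lt.2 this)
  -- build a strictly increasing sequence of indices with rapidly decreasing norms
  let k : ℕ → ℕ := fun j =>
    Nat.rec (key 0 ((1/2:ℝ)^0) (by positivity)).choose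
      (fun j kj => (key kj ((1/2:ℝ)^(j+1)) (by positivity)).choose) j
  have hk_lt : ∀ j, k j < k (j + 1) := fun j =>
    (key (k j) ((1/2:ℝ)^(j+1)) (by positivity)).choose_spec.1
  have hk_norm : ∀ j, ‖S (c0unit (k j))‖ ≤ (1/2:ℝ)^j := by
    intro j
    cases j with
    | zero => exact (key 0 ((1/2:ℝ)^0) (by positivity)).choose_spec.2.le
    | succ j => exact (key (k j) ((1/2:ℝ)^(j+1)) (by positivity)).choose_spec.2.le
  have hkmono : StrictMono k := strictMono_nat_of_lt_succ hk_lt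
  have hsum : Summable fun j => S (c0unit (k j)) :=
    Summable.of_norm_bounded summable_geometric_two hk_norm
  set g := ∑' j, S (c0unit (k j)) with hg
  have hjg : ∀ j, S (c0unit (k j)) ≤ g :=
    fun j => Summable.le_tsum hsum j fun i _ => hSpos (k i)
  set f := S.symm g with hf
  have hSf : S f = g := S.apply_symm_apply g
  have hle : ∀ j, c0unit (k j) ≤ f := by
    intro j
    exact (hord _ f).mpr (by rw [hSf]; exact hjg j)
  have h1 : ∀ j, (1:ℝ) ≤ f (k j) := by
    intro j
    have := (c0_le_iff.mp (hle j)) (k j)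
    simpa [c0unit] using this
  have hten : Tendsto (fun j => f (k j)) atTop (𝓝 0) := by
    have h0 := zero_at_infty f
    rw [cocompact_eq_atTop] at h0
    exact h0.comp hkmono.tendsto_atTop
  have : (1:ℝ) ≤ 0 := ge_of_tendsto hten (Eventually.of_forall h1)
  linarith
end
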